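/- arXiv:2403.13718 — 4 statements merged into one kernel-verified Lean document; each statement's English description precedes it below -/
import Mathlib

section
/- Let X, X₁, …, X_{n-1} be subsets of [n], each of cardinality n−1, and suppose not all of the Xᵢ are equal. Then the family of sets (X ∩ Xᵢ)_{i=1}^{n-1} has a system of distinct representatives: one can choose xᵢ ∈ X ∩ Xᵢ for each i ∈ [n−1] with xᵢ ≠ x_j whenever i ≠ j. -/
lemma aux_union_univ {n : ℕ} (A B : Finset (Fin n)) (hA : A.card = n - 1)
    (hB : B.card = n - 1) (hAB : A ≠ B) : A ∪ B = Finset.univ := by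
  have hn : 0 < n := by
    rcases Nat.eq_zero_or_pos n with h | h
    · exfalso; apply hAB; subst h; apply Finset.eq_of_subset_of_card_le
      · intro x _; exact absurd x.2 (Nat.not_lt_zero _)
      · omega
    · exact h
  have hsub : A ∩ B ⊆ A := Finset.inter_subset_left
  have hss : A ∩ B ≠ A := by
    intro h
    have hAsubB : A ⊆ B := by rw [← h]; exact Finset.inter_subset_right
    exact hAB (Finset.eq_of_subset_of_card_le hAsubB (by omega))
  have hlt : (A ∩ B).card < A.card :=
    Finset.card_lt_card (lt_of_le_of_ne hsub hss)
  have hcard := Finset.card_union_add_card_inter A B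
  have hle : (A ∪ B).card ≤ n := by
    simpa using Finset.card_le_card (Finset.subset_univ (A ∪ B))
  apply Finset.eq_of_subset_of_card_le (Finset.subset_univ _)
  simp only [Finset.card_univ, Fintype.card_fin]
  omega

/-- if `X, X₁, …, X_{n-1}` are subsets of `[n]` of size `n-1`,
not all of the `Xᵢ` equal, then the sets `X ∩ Xᵢ` admit a system of distinct
representatives. -/
theorem stmt_3 (n : ℕ) (X : Finset (Fin n)) (hX : X.card = n - 1)
    (Y : Fin (n - 1) → Finset (Fin n)) (hY : ∀ i, (Y i).card = n - 1)
    (hne : ∃ i j, Y i ≠ Y j) :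
    ∃ f : Fin (n - 1) → Fin n, Function.Injective f ∧ ∀ i, f i ∈ X ∩ Y i := by
  obtain ⟨i0, j0, hij⟩ := hne
  have hn : 2 ≤ n := by
    by_contra h
    have : n - 1 = 0 := by omega
    exact absurd i0.2 (by omega)
  rw [← Finset.all_card_le_biUnion_card_iff_exists_injective]
  intro s
  rcases Finset.eq_empty_or_nonempty s with rfl | ⟨i, hi⟩
  · simp
  have hcardXY : ∀ k, n - 2 ≤ (X ∩ Y k).card := by
    intro k
    have h1 := Finset.card_union_add_card_inter X (Y k)
    have h2 : (X ∪ Y k).card ≤ n := by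
      simpa using Finset.card_le_card (Finset.subset_univ (X ∪ Y k))
    have := hY k
    omega
  have hsub : X ∩ Y i ⊆ s.biUnion fun k => X ∩ Y k :=
    Finset.subset_biUnion_of_mem (fun k => X ∩ Y k) hi
  by_cases hs : s.card ≤ n - 2
  · calc s.card ≤ n - 2 := hs
      _ ≤ (X ∩ Y i).card := hcardXY i
      _ ≤ _ := Finset.card_le_card hsub
  · -- s.card = n - 1, so s = univ, hence i0 j0 ∈ s
    have hsle : s.card ≤ n - 1 := by
      have := Finset.card_le_card (Finset.subset_univ s)
      simpa using this
    have hscard : s.card = n - 1 := by omega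
    have hsuniv : s = Finset.univ := by
      apply Finset.eq_of_subset_of_card_le (Finset.subset_univ s)
      simp [hscard]
    have hXsub : X ⊆ s.biUnion fun k => X ∩ Y k := by
      have hU : Y i0 ∪ Y j0 = Finset.univ := aux_union_univ _ _ (hY i0) (hY j0) hij
      intro x hx
      have hx' : x ∈ Y i0 ∪ Y j0 := by rw [hU]; exact Finset.mem_univ x
      rw [Finset.mem_union] at hx'
      rcases hx' with h | h
      · exact Finset.mem_biUnion.2 ⟨i0, by simp [hsuniv], Finset.mem_inter.2 ⟨hx, h⟩⟩
      · exact Finset.mem_biUnion.2 ⟨j0, by simp [hsuniv], Finset.mem_inter.2 ⟨hx, h⟩⟩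
    calc s.card = n - 1 := hscard
      _ = X.card := hX.symm
      _ ≤ _ := Finset.card_le_card hXsub
end

section
/- Let k ≤ n and let Z = {X₁,…,X_k, Y₁,…,Y_k} be a multiset of 2k subsets of [n], each of size n−1. Suppose (i) there do not exist distinct subsets X, Y ⊂ [n] of size n−1 and a set J ⊂ [k] with |J| ≥ n−1 such that {X_j, Y_j} = {X, Y} for all j ∈ J, and (ii) no subset W ⊂ [n] of size n−1 occurs with multiplicity ≥ n in Z. Then the sets Cᵢ = Xᵢ ∩ Yᵢ (i ∈ [k]) admit a system of distinct representatives. -/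
lemma eq_compl_of_card_pred {n : ℕ} (A : Finset (Fin n)) (hA : A.card = n - 1)
    {w : Fin n} (hw : w ∉ A) : A = {w}ᶜ := by
  apply Finset.eq_of_subset_of_card_le
  · intro x hx
    rw [Finset.mem_compl, Finset.mem_singleton]
    rintro rfl; exact hw hx
  · rw [Finset.card_compl, Finset.card_singleton, Fintype.card_fin, hA]

/-- Hall-type result for the multiset `Z = {X₁,…,X_k,Y₁,…,Y_k}`
of subsets of `[n]` of size `n-1`: under conditions (i) and (ii) the sets
`Xᵢ ∩ Yᵢ` admit a system of distinct representatives. -/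
theorem stmt_4 (n k : ℕ) (hk : k ≤ n)
    (X Y : Fin k → Finset (Fin n))
    (hX : ∀ i, (X i).card = n - 1) (hY : ∀ i, (Y i).card = n - 1)
    (h1 : ¬ ∃ (A B : Finset (Fin n)) (J : Finset (Fin k)),
        A.card = n - 1 ∧ B.card = n - 1 ∧ A ≠ B ∧ n - 1 ≤ J.card ∧
        ∀ j ∈ J, ({X j, Y j} : Finset (Finset (Fin n))) = {A, B})
    (h2 : ∀ W : Finset (Fin n), W.card = n - 1 →
        (Finset.univ.filter (fun j => X j = W)).card
          + (Finset.univ.filter (fun j => Y j = W)).card < n) :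
    ∃ f : Fin k → Fin n, Function.Injective f ∧ ∀ i, f i ∈ X i ∩ Y i := by
  rw [← Finset.all_card_le_biUnion_card_iff_exists_injective]
  intro s
  by_contra hlt
  push_neg at hlt
  set U := s.biUnion (fun i => X i ∩ Y i) with hU
  have hsk : s.card ≤ k := by
    simpa using Finset.card_le_univ s
  have hsn : s.card ≤ n := hsk.trans hk
  have hUn : U.card ≤ n := by
    simpa using Finset.card_le_univ U
  obtain ⟨i0, hi0⟩ : s.Nonempty := Finset.card_pos.mp (lt_of_le_of_lt (Nat.zero_le _) hlt)
  have hC : ∀ i, n - 2 ≤ (X i ∩ Y i).card := by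
    intro i
    have h := Finset.card_union_add_card_inter (X i) (Y i)
    have hu : (X i ∪ Y i).card ≤ n := by simpa using Finset.card_le_univ (X i ∪ Y i)
    have h1' := hX i
    have h2' := hY i
    omega
  have hUcard : n - 2 ≤ U.card :=
    le_trans (hC i0) (Finset.card_le_card (hU ▸ Finset.subset_biUnion_of_mem (fun i => X i ∩ Y i) hi0))
  have hs1 : n - 1 ≤ s.card := by omega
  have hUc : Uᶜ.card = n - U.card := by
    rw [Finset.card_compl, Fintype.card_fin]
  have hmiss : ∀ w ∈ Uᶜ, ∀ j ∈ s, w ∉ X j ∩ Y j := by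
    intro w hw j hj hm
    exact (Finset.mem_compl.mp hw) (Finset.mem_biUnion.mpr ⟨j, hj, hm⟩)
  by_cases h2c : 2 ≤ Uᶜ.card
  · obtain ⟨w1, hw1, w2, hw2, hne⟩ := Finset.one_lt_card.mp h2c
    apply h1
    refine ⟨{w1}ᶜ, {w2}ᶜ, s, ?_, ?_, ?_, hs1, ?_⟩
    · rw [Finset.card_compl, Finset.card_singleton, Fintype.card_fin]
    · rw [Finset.card_compl, Finset.card_singleton, Fintype.card_fin]
    · intro h
      exact hne (Finset.singleton_injective (compl_injective h))
    · intro j hj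
      have hw1j := hmiss w1 hw1 j hj
      have hw2j := hmiss w2 hw2 j hj
      rw [Finset.mem_inter, not_and_or] at hw1j hw2j
      by_cases hx : w1 ∈ X j
      · have hy : w1 ∉ Y j := by tauto
        have hYj : Y j = {w1}ᶜ := eq_compl_of_card_pred _ (hY j) hy
        have hw2Y : w2 ∈ Y j := by
          rw [hYj, Finset.mem_compl, Finset.mem_singleton]; exact hne.symm
        have hx2 : w2 ∉ X j := by tauto
        have hXj : X j = {w2}ᶜ := eq_compl_of_card_pred _ (hX j) hx2
        rw [hXj, hYj, Finset.pair_comm]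
      · have hXj : X j = {w1}ᶜ := eq_compl_of_card_pred _ (hX j) hx
        have hw2X : w2 ∈ X j := by
          rw [hXj, Finset.mem_compl, Finset.mem_singleton]; exact hne.symm
        have hy2 : w2 ∉ Y j := by tauto
        have hYj : Y j = {w2}ᶜ := eq_compl_of_card_pred _ (hY j) hy2
        rw [hXj, hYj]
  · have hone : Uᶜ.card = 1 := by omega
    obtain ⟨w, hw⟩ := Finset.card_eq_one.mp hone
    have hW : ({w}ᶜ : Finset (Fin n)).card = n - 1 := by
      rw [Finset.card_compl, Finset.card_singleton, Fintype.card_fin]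
    have hcount := h2 {w}ᶜ hW
    have hsub : s ⊆ (Finset.univ.filter (fun j => X j = {w}ᶜ))
        ∪ (Finset.univ.filter (fun j => Y j = {w}ᶜ)) := by
      intro j hj
      have hwm := hmiss w (by rw [hw]; exact Finset.mem_singleton_self w) j hj
      rw [Finset.mem_inter, not_and_or] at hwm
      rw [Finset.mem_union, Finset.mem_filter, Finset.mem_filter]
      rcases hwm with h | h
      · exact Or.inl ⟨Finset.mem_univ j, eq_compl_of_card_pred _ (hX j) h⟩
      · exact Or.inr ⟨Finset.mem_univ j, eq_compl_of_card_pred _ (hY j) h⟩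
    have hle := (Finset.card_le_card hsub).trans (Finset.card_union_le _ _)
    omega
end

section
/- With the setup of the previous statement, the set of z ∈ ℂ^𝒫 such that all lifted collections {γ̃_{c} : c ∈ 𝒞} are degenerate in the sense that all lifted vectors lie in a common hyperplane not containing q forms a linear subspace of dimension exactly n−1 of ker of the lifting matrix; hence a non-degenerate lifting exists if and only if dim ker ℳ ≥ n, equivalently all (|𝒫|−n+1)-minors of ℳ vanish. -/
/-- The lifted vector `γ̃_p = (y_p, 1, z_p) ∈ ℂⁿ` (for `z = 0` this is
`γ_p = (y_p, 1, 0)`, a vector of the hyperplane `x_n = 0`). -/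
def gLift (n : ℕ) {P : Type} (y : P → Fin (n - 2) → ℂ) (z : P → ℂ) (p : P) :
    Fin n → ℂ := fun j =>
  if h : (j : ℕ) < n - 2 then y p ⟨j, h⟩
  else if (j : ℕ) = n - 2 then 1 else z p

/-- The order-preserving enumeration of `{0,…,n-1} \ {i}`. -/
def embAux (n : ℕ) (i : Fin n) (j : Fin (n - 1)) : Fin n :=
  if (j : ℕ) < (i : ℕ) then
    ⟨j.val, by have := j.isLt; have := i.isLt; omega⟩
  else ⟨j.val + 1, by have := j.isLt; have := i.isLt; omega⟩

/-- The `(n-1)`-minor: determinant of the `(n-1)×(n-1)` matrix whose columns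
are the vectors `(y_{c_j}, 1)` for `j ≠ i`. -/
noncomputable def minorAux (n : ℕ) {P : Type} (y : P → Fin (n - 2) → ℂ)
    (c : Fin n → P) (i : Fin n) : ℂ :=
  Matrix.det (Matrix.of fun (r j : Fin (n - 1)) =>
    if h : (r : ℕ) < n - 2 then y (c (embAux n i j)) ⟨r, h⟩ else 1)

/-- The lifting matrix `ℳ`: rows indexed by the circuits `c ∈ 𝒞`, columns by
the points; the row of `c` has entry `(-1)^{i-1}` times the minor omitting
`cᵢ` in column `cᵢ`, and zeros elsewhere. -/
noncomputable def liftMat (n : ℕ) (P : Type) [DecidableEq P]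
    (y : P → Fin (n - 2) → ℂ) (C : Finset (Fin n → P)) :
    Matrix {c // c ∈ C} P ℂ := fun c p =>
  ∑ i : Fin n, if c.1 i = p then (-1 : ℂ) ^ (i : ℕ) * minorAux n y c.1 i else 0

/-- The set of degenerate liftings: those `z` for which all lifted vectors lie
in a common hyperplane not containing `q = (0,…,0,1)`. -/
def Degenerate (n : ℕ) (P : Type) (y : P → Fin (n - 2) → ℂ) : Set (P → ℂ) :=
  {z | ∃ H : Submodule ℂ (Fin n → ℂ), Module.finrank ℂ H = n - 1 ∧
    (∀ p, gLift n y z p ∈ H) ∧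
    (fun j : Fin n => if (j : ℕ) = n - 1 then (1 : ℂ) else 0) ∉ H}

open Matrix Module Submodule

/-- A square matrix can be extracted with independent columns when rank ≥ k. -/
theorem myExtractCols {I J : Type} [Fintype I] [Fintype J]
    (M : Matrix I J ℂ) (k : ℕ) (h : k ≤ M.rank) :
    ∃ g : Fin k → J, LinearIndependent ℂ (fun j (i : I) => M i (g j)) := by
  classical
  obtain ⟨b, hbsub, hbspan, hbind⟩ := exists_linearIndependent ℂ (Set.range Mᵀ)
  have hbfin : b.Finite := hbind.setFinite
  haveI : Fintype b := hbfin.fintype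
  have hcard : k ≤ Fintype.card b := by
    have h1 : M.rank = finrank ℂ (span ℂ b) := by
      rw [Matrix.rank_eq_finrank_span_cols, hbspan]; rfl
    rw [finrank_span_set_eq_card hbind, Set.toFinset_card] at h1
    omega
  obtain ⟨e⟩ : Nonempty (Fin k ↪ b) := Function.Embedding.nonempty_of_card_le (by simpa using hcard)
  have hind : LinearIndependent ℂ (fun t : Fin k => ((e t : I → ℂ))) :=
    hbind.comp e e.injective
  choose g hg using fun t : Fin k => hbsub (e t).2
  refine ⟨g, ?_⟩
  have : (fun j (i : I) => M i (g j)) = fun t : Fin k => ((e t : I → ℂ)) := by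
    funext t; rw [← hg t]; rfl
  rw [this]; exact hind

/-- rank < k iff all k×k minors vanish. -/
theorem myMinor {I J : Type} [Fintype I] [Fintype J] [DecidableEq I] [DecidableEq J]
    (M : Matrix I J ℂ) (k : ℕ) :
    M.rank < k ↔ ∀ (f : Fin k → I) (g : Fin k → J), (M.submatrix f g).det = 0 := by
  classical
  constructor
  · intro hrk f g
    by_contra hdet
    have hunit : IsUnit (M.submatrix f g) :=
      (Matrix.isUnit_iff_isUnit_det _).mpr (isUnit_iff_ne_zero.mpr hdet)
    have hcols : LinearIndependent ℂ (fun j => (M.submatrix f g)ᵀ j) :=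
      Matrix.linearIndependent_cols_iff_isUnit.mpr hunit
    -- columns of M at g are independent
    have hcols' : LinearIndependent ℂ (fun j => Mᵀ (g j)) := by
      rw [Fintype.linearIndependent_iff] at hcols ⊢
      intro a ha j
      refine hcols a ?_ j
      funext i'
      have := congrFun ha (f i')
      simpa [Finset.sum_apply] using this
    have hle : k ≤ M.rank := by
      have h1 : finrank ℂ (span ℂ (Set.range fun j => Mᵀ (g j))) = k := by
        rw [finrank_span_eq_card hcols', Fintype.card_fin]
      have h2 : span ℂ (Set.range fun j => Mᵀ (g j)) ≤ span ℂ (Set.range Mᵀ) :=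
        span_mono (Set.range_comp_subset_range g Mᵀ)
      have h3 := Submodule.finrank_mono h2
      rw [h1] at h3
      rw [Matrix.rank_eq_finrank_span_cols]; exact h3
    omega
  · intro hall
    by_contra hrk
    push_neg at hrk
    obtain ⟨g, hg⟩ := myExtractCols M k hrk
    have hsubrank : ((M.submatrix id g)ᵀ).rank = k := by
      rw [Matrix.rank_transpose, Matrix.rank_eq_finrank_span_cols]
      have : LinearIndependent ℂ (M.submatrix id g).col := hg
      rw [finrank_span_eq_card this, Fintype.card_fin]
    obtain ⟨f, hf⟩ := myExtractCols ((M.submatrix id g)ᵀ) k (le_of_eq hsubrank.symm)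
    have hrows : LinearIndependent ℂ (fun i => (M.submatrix f g) i) := hf
    have := Matrix.linearIndependent_rows_iff_isUnit.mp hrows
    have hdet := (Matrix.isUnit_iff_isUnit_det _).mp this
    rw [isUnit_iff_ne_zero] at hdet
    exact hdet (hall f g)
/-- The row vectors `(y_·(j), …, 1)`. -/
def vAux (k : ℕ) {P : Type} (y : P → Fin k → ℂ) (j : Fin (k + 1)) (p : P) : ℂ :=
  if h : (j : ℕ) < k then y p ⟨j, h⟩ else 1

theorem embAux_eq (k : ℕ) (i : Fin (k + 2)) (j : Fin (k + 1)) :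
    embAux (k + 2) i j = i.succAbove j := by
  rw [Fin.succAbove]
  unfold embAux
  by_cases h : (j : ℕ) < (i : ℕ)
  · rw [if_pos h, if_pos (by simpa [Fin.lt_def] using h)]
    exact Fin.ext rfl
  · rw [if_neg h, if_neg (by simpa [Fin.lt_def] using h)]
    exact Fin.ext rfl

theorem myLaplace (k : ℕ) {P : Type} (y : P → Fin k → ℂ) (c : Fin (k + 2) → P)
    (w : Fin (k + 2) → ℂ) :
    ∑ i : Fin (k + 2), (-1 : ℂ) ^ (i : ℕ) * minorAux (k + 2) y c i * w i
      = (-1 : ℂ) ^ (k + 1) * Matrix.det (Matrix.of fun r i : Fin (k + 2) =>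
          if h : (r : ℕ) < k + 1 then vAux k y ⟨r, h⟩ (c i) else w i) := by
  rw [Matrix.det_succ_row _ (Fin.last (k + 1))]
  rw [Finset.mul_sum]
  refine Finset.sum_congr rfl fun i _ => ?_
  have hlast : (Matrix.of fun r i : Fin (k + 2) =>
      if h : (r : ℕ) < k + 1 then vAux k y ⟨r, h⟩ (c i) else w i) (Fin.last (k + 1)) i = w i := by
    simp [Matrix.of_apply]
  have hminor : ((Matrix.of fun r i : Fin (k + 2) =>
      if h : (r : ℕ) < k + 1 then vAux k y ⟨r, h⟩ (c i) else w i).submatrix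
        (Fin.last (k + 1)).succAbove i.succAbove).det = minorAux (k + 2) y c i := by
    unfold minorAux
    congr 1
    funext r j
    rw [Matrix.submatrix_apply, Fin.succAbove_last, Matrix.of_apply, Matrix.of_apply]
    have hr : ((r.castSucc : Fin (k + 2)) : ℕ) < k + 1 := by
      simpa using r.isLt
    rw [dif_pos hr, embAux_eq]
    unfold vAux
    rfl
  rw [hlast, hminor]
  have h1 : ((-1 : ℂ) ^ ((Fin.last (k + 1) : Fin (k+2)) + (i : Fin (k+2)) : ℕ)) =
      (-1 : ℂ) ^ (k + 1) * (-1 : ℂ) ^ (i : ℕ) := by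
    rw [← pow_add]
    simp [Fin.last]
  rw [h1]
  have h2 : ((-1 : ℂ) ^ (k + 1)) * ((-1 : ℂ) ^ (k + 1)) = 1 := by
    rw [← pow_add, show (k + 1) + (k + 1) = 2 * (k + 1) by ring, pow_mul]
    norm_num
  ring_nf
  rw [show ((-1:ℂ)) ^ (k * 2) = 1 by rw [mul_comm k 2, pow_mul]; norm_num, mul_one]

theorem myRowRepeat (k : ℕ) {P : Type} (y : P → Fin k → ℂ) (c : Fin (k + 2) → P)
    (j0 : Fin (k + 1)) :
    ∑ i : Fin (k + 2), (-1 : ℂ) ^ (i : ℕ) * minorAux (k + 2) y c i * vAux k y j0 (c i) = 0 := by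
  rw [myLaplace k y c (fun i => vAux k y j0 (c i))]
  rw [Matrix.det_zero_of_row_eq (i := j0.castSucc) (j := Fin.last (k + 1)), mul_zero]
  · intro h
    have := congrArg (Fin.val) h
    simp [Fin.last] at this
    omega
  · funext i
    rw [Matrix.of_apply, Matrix.of_apply, dif_pos (by simpa using j0.isLt),
      dif_neg (by simp)]
    congr 1

theorem gLift_castSucc (k : ℕ) {P : Type} (y : P → Fin k → ℂ) (z : P → ℂ) (p : P)
    (j : Fin (k + 1)) : gLift (k + 2) y z p j.castSucc = vAux k y j p := by
  unfold gLift vAux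
  simp only [Fin.coe_castSucc, Nat.add_sub_cancel]
  by_cases h : (j : ℕ) < k
  · rw [dif_pos h, dif_pos h]
  · rw [dif_neg h, dif_neg h]
    have : (j : ℕ) = k := by have := j.isLt; omega
    rw [if_pos this]

theorem gLift_last (k : ℕ) {P : Type} (y : P → Fin k → ℂ) (z : P → ℂ) (p : P) :
    gLift (k + 2) y z p (Fin.last (k + 1)) = z p := by
  unfold gLift
  simp only [Fin.val_last, Nat.add_sub_cancel]
  rw [dif_neg (by omega), if_neg (by omega)]
theorem vAux_indep (k : ℕ) {P : Type} (y : P → Fin k → ℂ)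
    (s : Fin (k + 1) → P)
    (hs : LinearIndependent ℂ (fun t => gLift (k + 2) y (0 : P → ℂ) (s t))) :
    LinearIndependent ℂ (vAux k y) := by
  classical
  have hcol : LinearIndependent ℂ (fun t (r : Fin (k + 1)) => vAux k y r (s t)) := by
    rw [Fintype.linearIndependent_iff] at hs ⊢
    intro a ha t
    refine hs a ?_ t
    funext j
    rw [Finset.sum_apply]
    by_cases hj : (j : ℕ) < k + 1
    · have := congrFun ha ⟨j, hj⟩
      rw [Finset.sum_apply] at this
      simp only [Pi.smul_apply, smul_eq_mul, Pi.zero_apply] at this ⊢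
      calc ∑ t, a t * gLift (k + 2) y 0 (s t) j
          = ∑ t, a t * vAux k y ⟨j, hj⟩ (s t) := by
            refine Finset.sum_congr rfl fun t _ => ?_
            congr 1
            rw [← gLift_castSucc k y 0 (s t) ⟨j, hj⟩]
            rfl
        _ = 0 := this
    · have hj' : j = Fin.last (k + 1) := Fin.ext (by have := j.isLt; simp [Fin.last]; omega)
      subst hj'
      simp only [Pi.smul_apply, smul_eq_mul, Pi.zero_apply]
      refine Finset.sum_eq_zero fun t _ => ?_
      rw [gLift_last k y 0 (s t)]
      simp
  have hB : IsUnit (Matrix.of fun (r t : Fin (k + 1)) => vAux k y r (s t)) := by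
    rw [← Matrix.linearIndependent_cols_iff_isUnit]
    exact hcol
  have hrows := Matrix.linearIndependent_rows_iff_isUnit.mpr hB
  rw [Fintype.linearIndependent_iff] at hrows ⊢
  intro a ha r
  refine hrows a ?_ r
  funext t
  have := congrFun ha (s t)
  rw [Finset.sum_apply] at this
  rw [Finset.sum_apply]
  simpa using this

/-- the degenerate liftings form a linear subspace of dimension
exactly `n-1` of `ker ℳ`; hence a non-degenerate lifting exists iff
`dim ker ℳ ≥ n`, equivalently iff all `(|𝒫|-n+1)`-minors of `ℳ` vanish. -/
theorem stmt_16 (n : ℕ) (hn : 2 ≤ n) (P : Type) [Fintype P] [DecidableEq P]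
    (hcard : n ≤ Fintype.card P)
    (y : P → Fin (n - 2) → ℂ)
    (hspan : Submodule.span ℂ (Set.range (gLift n y (0 : P → ℂ)))
      = LinearMap.ker
          (LinearMap.proj (R := ℂ) (φ := fun _ : Fin n => ℂ) ⟨n - 1, by omega⟩))
    (hind : ∃ s : Fin (n - 1) → P,
      LinearIndependent ℂ (fun t => gLift n y (0 : P → ℂ) (s t)))
    (C : Finset (Fin n → P)) (hC : ∀ c ∈ C, Function.Injective c) :
    (∃ W : Submodule ℂ (P → ℂ),
        (W : Set (P → ℂ)) = Degenerate n P y ∧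
        Module.finrank ℂ W = n - 1 ∧
        (W : Set (P → ℂ)) ⊆ LinearMap.ker (liftMat n P y C).mulVecLin)
    ∧ ((∃ z, z ∈ LinearMap.ker (liftMat n P y C).mulVecLin ∧
          z ∉ Degenerate n P y)
        ↔ n ≤ Module.finrank ℂ (LinearMap.ker (liftMat n P y C).mulVecLin))
    ∧ (n ≤ Module.finrank ℂ (LinearMap.ker (liftMat n P y C).mulVecLin)
        ↔ ∀ (f : Fin (Fintype.card P - n + 1) → {c // c ∈ C})
            (g : Fin (Fintype.card P - n + 1) → P),
            ((liftMat n P y C).submatrix f g).det = 0) := by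
  obtain ⟨k, rfl⟩ : ∃ k, n = k + 2 := ⟨n - 2, by omega⟩
  clear hn hspan hC
  classical
  obtain ⟨s, hs⟩ := hind
  have hvind : LinearIndependent ℂ (vAux k y) := vAux_indep k y s hs
  set W : Submodule ℂ (P → ℂ) := Submodule.span ℂ (Set.range (vAux k y)) with hW
  have hWmem : ∀ z : P → ℂ, z ∈ W ↔ ∃ a : Fin (k + 1) → ℂ, ∑ j, a j • vAux k y j = z :=
    fun z => mem_span_range_iff_exists_fun ℂ
  have hWrank : finrank ℂ W = k + 1 := by
    rw [hW, finrank_span_eq_card hvind, Fintype.card_fin]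
  have hWdeg : (W : Set (P → ℂ)) = Degenerate (k + 2) P y := by
    ext z
    simp only [SetLike.mem_coe, Degenerate, Set.mem_setOf_eq]
    constructor
    · intro hz
      obtain ⟨a, ha⟩ := (hWmem z).mp hz
      set φ : (Fin (k + 2) → ℂ) →ₗ[ℂ] ℂ :=
        (∑ j : Fin (k + 1), a j • LinearMap.proj (R := ℂ) (φ := fun _ : Fin (k + 2) => ℂ)
            j.castSucc)
          - LinearMap.proj (Fin.last (k + 1)) with hφdef
      have hφ : ∀ x : Fin (k + 2) → ℂ,
          φ x = (∑ j : Fin (k + 1), a j * x j.castSucc) - x (Fin.last (k + 1)) := by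
        intro x
        simp [hφdef, LinearMap.sum_apply]
      have hq : φ (fun j : Fin (k + 2) => if (j : ℕ) = k + 2 - 1 then (1 : ℂ) else 0)
          = -1 := by
        rw [hφ]
        have h1 : ∀ j : Fin (k + 1),
            (if ((j.castSucc : Fin (k + 2)) : ℕ) = k + 2 - 1 then (1 : ℂ) else 0) = 0 := by
          intro j
          rw [if_neg]
          have := j.isLt
          simp only [Fin.coe_castSucc]
          omega
        rw [Finset.sum_congr rfl (fun j _ => by rw [h1 j, mul_zero]), Finset.sum_const_zero]
        simp [Fin.last]
      have hmem : ∀ p, gLift (k + 2) y z p ∈ LinearMap.ker φ := by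
        intro p
        rw [LinearMap.mem_ker, hφ]
        rw [gLift_last k y z p]
        have h3 := congrFun ha p
        rw [Finset.sum_apply] at h3
        simp only [Pi.smul_apply, smul_eq_mul] at h3
        rw [Finset.sum_congr rfl fun j _ => by rw [gLift_castSucc k y z p j]]
        rw [h3]
        ring
      refine ⟨LinearMap.ker φ, ?_, hmem, ?_⟩
      · have hrn := LinearMap.finrank_range_add_finrank_ker φ
        rw [Module.finrank_fintype_fun_eq_card, Fintype.card_fin] at hrn
        have hr1 : finrank ℂ (LinearMap.range φ) ≤ 1 := by
          have := Submodule.finrank_le (LinearMap.range φ)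
          rwa [Module.finrank_self] at this
        have hr0 : finrank ℂ (LinearMap.range φ) ≠ 0 := by
          intro h0
          rw [Submodule.finrank_eq_zero] at h0
          have hmem' : φ (fun j : Fin (k + 2) => if (j : ℕ) = k + 2 - 1 then (1 : ℂ) else 0)
              ∈ LinearMap.range φ := LinearMap.mem_range_self _ _
          rw [h0, Submodule.mem_bot, hq] at hmem'
          norm_num at hmem'
        omega
      · intro hmemq
        rw [LinearMap.mem_ker, hq] at hmemq
        norm_num at hmemq
    · rintro ⟨H, hHrank, hHmem, hHq⟩
      have hHrank' : finrank ℂ H = k + 1 := hHrank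
      set qv : Fin (k + 2) → ℂ := fun j => if (j : ℕ) = k + 2 - 1 then (1 : ℂ) else 0 with hqv
      have hqv0 : qv ≠ 0 := by
        intro h
        have := congrFun h (Fin.last (k + 1))
        simp [hqv, Fin.last] at this
      have hdisj : Disjoint H (ℂ ∙ qv) := by
        rw [Submodule.disjoint_def]
        intro x hxH hxq
        obtain ⟨cc, rfl⟩ := Submodule.mem_span_singleton.mp hxq
        rcases eq_or_ne cc 0 with rfl | hcc
        · simp
        · exact absurd (by simpa [smul_smul, inv_mul_cancel₀ hcc] using H.smul_mem cc⁻¹ hxH) hHq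
      have htop : H ⊔ (ℂ ∙ qv) = ⊤ := by
        apply Submodule.eq_top_of_finrank_eq
        have h4 := Submodule.finrank_sup_add_finrank_inf_eq H (ℂ ∙ qv)
        rw [disjoint_iff.mp hdisj, finrank_bot, finrank_span_singleton hqv0, hHrank'] at h4
        rw [Module.finrank_fintype_fun_eq_card, Fintype.card_fin]
        omega
      have hcompl : IsCompl H (ℂ ∙ qv) := ⟨hdisj, codisjoint_iff.mpr htop⟩
      set π := Submodule.projectionOnto (ℂ ∙ qv) H hcompl.symm with hπ
      set φ : (Fin (k + 2) → ℂ) →ₗ[ℂ] ℂ :=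
        (LinearMap.proj (R := ℂ) (φ := fun _ : Fin (k + 2) => ℂ) (Fin.last (k + 1))).comp
          ((Submodule.subtype _).comp π) with hφdef
      have hφH : ∀ x ∈ H, φ x = 0 := by
        intro x hx
        simp [hφdef, hπ, Submodule.projectionOnto_apply_of_mem_right hcompl.symm hx]
      have hφq : φ qv = 1 := by
        have h5 : π qv = ⟨qv, Submodule.mem_span_singleton_self qv⟩ :=
          Submodule.linearProjOfIsCompl_apply_left hcompl.symm
            ⟨qv, Submodule.mem_span_singleton_self qv⟩
        rw [hφdef]
        simp only [LinearMap.comp_apply, Submodule.coe_subtype]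
        rw [h5]
        show qv (Fin.last (k + 1)) = 1
        simp [hqv, Fin.last]
      have hsplit : ∀ p, gLift (k + 2) y z p = gLift (k + 2) y 0 p + z p • qv := by
        intro p
        funext j
        simp only [Pi.add_apply, Pi.smul_apply, smul_eq_mul, hqv]
        unfold gLift
        by_cases h1 : (j : ℕ) < k + 2 - 2
        · rw [dif_pos h1, dif_pos h1, if_neg (by omega), mul_zero, add_zero]
        · rw [dif_neg h1, dif_neg h1]
          by_cases h2 : (j : ℕ) = k + 2 - 2
          · rw [if_pos h2, if_pos h2, if_neg (by omega), mul_zero, add_zero]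
          · rw [if_neg h2, if_neg h2, if_pos (by have := j.isLt; omega), mul_one,
              Pi.zero_apply, zero_add]
      have hzval : ∀ p, z p = -φ (gLift (k + 2) y 0 p) := by
        intro p
        have h0 := hφH _ (hHmem p)
        rw [hsplit p, map_add, _root_.map_smul, hφq, smul_eq_mul, mul_one] at h0
        linear_combination h0
      have hγ : ∀ p, gLift (k + 2) y 0 p
          = ∑ j : Fin (k + 1), vAux k y j p •
              Pi.single (M := fun _ : Fin (k + 2) => ℂ) j.castSucc 1 := by
        intro p
        funext r
        rw [Finset.sum_apply]
        simp only [Pi.smul_apply, Pi.single_apply, smul_eq_mul, mul_ite, mul_one, mul_zero]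
        by_cases hr : (r : ℕ) < k + 1
        · have hcond : ∀ j : Fin (k + 1), (r = j.castSucc) ↔ (j = ⟨r, hr⟩) := by
            intro j
            constructor
            · intro h
              have h' := congrArg Fin.val h
              simp only [Fin.coe_castSucc] at h'
              exact Fin.ext h'.symm
            · intro h
              subst h
              exact Fin.ext rfl
          simp only [hcond]
          rw [Finset.sum_ite_eq' Finset.univ (⟨r, hr⟩ : Fin (k + 1)) (fun j => vAux k y j p),
            if_pos (Finset.mem_univ _)]
          rw [← gLift_castSucc k y 0 p ⟨r, hr⟩]
          rfl
        · rw [Finset.sum_eq_zero (fun j _ => by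
            rw [if_neg (fun h => by
              have h' := congrArg Fin.val h
              simp only [Fin.coe_castSucc] at h'
              have := j.isLt
              omega)])]
          unfold gLift
          rw [dif_neg (by omega), if_neg (by omega)]
          rfl
      refine (hWmem z).mpr ⟨fun j => -φ (Pi.single j.castSucc 1), ?_⟩
      funext p
      rw [Finset.sum_apply]
      simp only [Pi.smul_apply, smul_eq_mul]
      rw [hzval p, hγ p, map_sum, ← Finset.sum_neg_distrib]
      refine Finset.sum_congr rfl fun j _ => ?_
      rw [_root_.map_smul, smul_eq_mul]
      ring
  have hWker : (W : Set (P → ℂ))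
      ⊆ (LinearMap.ker (liftMat (k + 2) P y C).mulVecLin : Set (P → ℂ)) := by
    intro z hz
    obtain ⟨a, ha⟩ := (hWmem z).mp hz
    have key : ∀ q : P, z q = ∑ j, a j * vAux k y j q := by
      intro q
      have h3 := congrFun ha q
      rw [Finset.sum_apply] at h3
      simp only [Pi.smul_apply, smul_eq_mul] at h3
      exact h3.symm
    simp only [SetLike.mem_coe, LinearMap.mem_ker]
    rw [Matrix.mulVecLin_apply]
    funext c
    rw [Matrix.mulVec, Pi.zero_apply]
    unfold dotProduct liftMat
    calc ∑ p, (∑ i : Fin (k + 2),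
            if c.1 i = p then (-1 : ℂ) ^ (i : ℕ) * minorAux (k + 2) y c.1 i else 0) * z p
        = ∑ p, ∑ i : Fin (k + 2),
            (if c.1 i = p then (-1 : ℂ) ^ (i : ℕ) * minorAux (k + 2) y c.1 i * z p else 0) := by
          refine Finset.sum_congr rfl fun p _ => ?_
          rw [Finset.sum_mul]
          refine Finset.sum_congr rfl fun i _ => ?_
          rw [ite_mul, zero_mul]
      _ = ∑ i : Fin (k + 2), ∑ p,
            (if c.1 i = p then (-1 : ℂ) ^ (i : ℕ) * minorAux (k + 2) y c.1 i * z p else 0) :=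
          Finset.sum_comm
      _ = ∑ i : Fin (k + 2), (-1 : ℂ) ^ (i : ℕ) * minorAux (k + 2) y c.1 i * z (c.1 i) := by
          refine Finset.sum_congr rfl fun i _ => ?_
          rw [Finset.sum_ite_eq Finset.univ (c.1 i)
            (fun p => (-1 : ℂ) ^ (i : ℕ) * minorAux (k + 2) y c.1 i * z p),
            if_pos (Finset.mem_univ _)]
      _ = ∑ i : Fin (k + 2), ∑ j : Fin (k + 1),
            a j * ((-1 : ℂ) ^ (i : ℕ) * minorAux (k + 2) y c.1 i * vAux k y j (c.1 i)) := by
          refine Finset.sum_congr rfl fun i _ => ?_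
          rw [key (c.1 i), Finset.mul_sum]
          refine Finset.sum_congr rfl fun j _ => ?_
          ring
      _ = ∑ j : Fin (k + 1), ∑ i : Fin (k + 2),
            a j * ((-1 : ℂ) ^ (i : ℕ) * minorAux (k + 2) y c.1 i * vAux k y j (c.1 i)) :=
          Finset.sum_comm
      _ = 0 := by
          refine Finset.sum_eq_zero fun j _ => ?_
          rw [← Finset.mul_sum, myRowRepeat k y c.1 j, mul_zero]
  set K := LinearMap.ker (liftMat (k + 2) P y C).mulVecLin with hK
  have hWle : W ≤ K := fun x hx => hWker hx
  refine ⟨⟨W, hWdeg, hWrank, hWker⟩, ?_, ?_⟩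
  · constructor
    · rintro ⟨z, hzk, hzd⟩
      by_contra hlt
      push_neg at hlt
      have hWK : W = K := Submodule.eq_of_le_of_finrank_le hWle (by omega)
      exact hzd (by rw [← hWdeg, hWK]; exact hzk)
    · intro hge
      have hne : W ≠ K := by
        intro h
        rw [h] at hWrank
        omega
      obtain ⟨z, hzK, hzW⟩ := SetLike.exists_of_lt (lt_of_le_of_ne hWle hne)
      exact ⟨z, hzK, by rw [← hWdeg]; exact hzW⟩
  · have hrn := LinearMap.finrank_range_add_finrank_ker (liftMat (k + 2) P y C).mulVecLin
    rw [Module.finrank_fintype_fun_eq_card] at hrn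
    have hrank_eq : (liftMat (k + 2) P y C).rank
        = finrank ℂ (LinearMap.range (liftMat (k + 2) P y C).mulVecLin) := rfl
    rw [← hrank_eq, ← hK] at hrn
    constructor
    · intro hge
      exact (myMinor _ _).mp (by omega)
    · intro hall
      have := (myMinor _ _).mpr hall
      omega
end

section
/- Let 𝒫 be a finite set of size d and let ℳ be the uniform-matroid lifting matrix: rows indexed by all n-subsets of 𝒫 with the determinantal entries as above, evaluated at vectors {γ_p = (y_p,1,0) : p ∈ 𝒫} spanning the hyperplane x_n = 0 of ℂⁿ. If q = (0,…,0,1), then dim ker ℳ = n − 1; i.e., the only liftings z of the γ_p from q keeping every n of the lifted vectors dependent are the degenerate ones obtained by projecting onto a single hyperplane. -/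
open scoped Classical

/-- The lifting matrix of the uniform matroid of rank `n-1`: one row for each
injective `n`-tuple of points (an `n`-circuit), with the signed minors as
entries. -/
noncomputable def liftMatU (n : ℕ) (P : Type) [Fintype P] [DecidableEq P]
    (y : P → Fin (n - 2) → ℂ) :
    Matrix {c : Fin n → P // Function.Injective c} P ℂ := fun c p =>
  ∑ i : Fin n, if c.1 i = p then (-1 : ℂ) ^ (i : ℕ) * minorAux n y c.1 i else 0

lemma embAux_eq_succAbove (m : ℕ) (i : Fin (m+2)) (j : Fin (m+1)) :
    embAux (m+2) i j = i.succAbove j := by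
  unfold embAux Fin.succAbove
  split_ifs with h1 h2 h2 <;>
    simp_all [Fin.lt_def, Fin.ext_iff, Fin.castSucc, Fin.succ] <;> omega

lemma cofactor (m : ℕ) (u : Fin (m+2) → Fin (m+1) → ℂ) (zz : Fin (m+2) → ℂ) :
    ∑ i : Fin (m+2), (-1:ℂ)^(i:ℕ) *
      Matrix.det (Matrix.of fun (r j : Fin (m+1)) => u (embAux (m+2) i j) r) * zz i
    = (-1:ℂ)^(m+1) * Matrix.det (Matrix.of fun (r i : Fin (m+2)) =>
        if h : (r:ℕ) < m+1 then u i ⟨r,h⟩ else zz i) := by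
  rw [Matrix.det_succ_row _ (Fin.last (m+1))]
  rw [Finset.mul_sum]
  apply Finset.sum_congr rfl
  intro i _
  have hlast : ∀ k : Fin (m+1), ((Fin.last (m+1)).succAbove k) = k.castSucc := by
    simp [Fin.succAbove_last]
  have h1 : (Matrix.of fun (r i : Fin (m+2)) =>
        if h : (r:ℕ) < m+1 then u i ⟨r,h⟩ else zz i) (Fin.last (m+1)) i = zz i := by
    simp
  have h2 : ((Matrix.of fun (r i : Fin (m+2)) =>
        if h : (r:ℕ) < m+1 then u i ⟨r,h⟩ else zz i).submatrix
        (Fin.last (m+1)).succAbove i.succAbove)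
      = (Matrix.of fun (r j : Fin (m+1)) => u (embAux (m+2) i j) r) := by
    ext r k
    simp [Matrix.submatrix, hlast, embAux_eq_succAbove]
    intro h; exact absurd r.isLt (by omega)
  rw [h1, h2]
  have : ((Fin.last (m+1) : Fin (m+2)) : ℕ) = m+1 := rfl
  rw [this, pow_add]
  ring_nf
  rw [mul_comm m 2, pow_mul]
  norm_num

/-- for the uniform matroid of rank `n-1`, if the vectors
`(y_p, 1) ∈ ℂ^{n-1}` span `ℂ^{n-1}`, the kernel of the lifting matrix
(with respect to `q = (0,…,0,1)`) has dimension exactly `n - 1`. -/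
theorem stmt_17 (n : ℕ) (hn : 2 ≤ n) (P : Type) [Fintype P] [DecidableEq P]
    (y : P → Fin (n - 2) → ℂ)
    (hspan : Submodule.span ℂ (Set.range fun p =>
        (fun t : Fin (n - 1) => if h : (t : ℕ) < n - 2 then y p ⟨t, h⟩ else 1))
      = ⊤) :
    Module.finrank ℂ (LinearMap.ker (liftMatU n P y).mulVecLin) = n - 1 := by
  obtain ⟨m, rfl⟩ : ∃ m, n = m + 2 := ⟨n - 2, by omega⟩
  clear hn
  set v : P → Fin (m+1) → ℂ :=
    fun p t => if h : (t:ℕ) < m then y p ⟨t,h⟩ else 1 with hv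
  have hspan' : Submodule.span ℂ (Set.range v) = ⊤ := hspan
  set L : (Fin (m+1) → ℂ) →ₗ[ℂ] (P → ℂ) :=
    (Matrix.of fun p t => v p t).mulVecLin with hLdef
  have hLapp : ∀ (a : Fin (m+1) → ℂ) (p : P), L a p = ∑ t, v p t * a t := by
    intro a p
    simp [hLdef, Matrix.mulVecLin_apply, Matrix.mulVec, dotProduct]
  -- injectivity of L
  have hLinj : Function.Injective L := by
    rw [← LinearMap.ker_eq_bot, LinearMap.ker_eq_bot']
    intro a ha
    set φ : (Fin (m+1) → ℂ) →ₗ[ℂ] ℂ := ∑ t, a t • LinearMap.proj t with hφ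
    have hφapp : ∀ x, φ x = ∑ t, a t * x t := by
      intro x; simp [hφ, LinearMap.sum_apply]
    have hφ0 : ∀ x, φ x = 0 := by
      intro x
      have hmem : x ∈ Submodule.span ℂ (Set.range v) := by rw [hspan']; trivial
      have hle : Submodule.span ℂ (Set.range v) ≤ LinearMap.ker φ := by
        rw [Submodule.span_le]
        rintro _ ⟨p, rfl⟩
        have h0 := congrFun ha p
        rw [hLapp] at h0
        simp only [Pi.zero_apply] at h0
        simp only [LinearMap.mem_ker, SetLike.mem_coe, hφapp]
        rw [Finset.sum_congr rfl (fun t _ => mul_comm (a t) (v p t))]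
        exact h0
      exact hle hmem
    funext t
    have h1 := hφ0 (fun s => if s = t then 1 else 0)
    rw [hφapp] at h1
    simpa [Finset.sum_ite_eq] using h1
  -- row formula
  have hrow : ∀ (z : P → ℂ) (c : {c : Fin (m+2) → P // Function.Injective c}),
      (liftMatU (m+2) P y).mulVecLin z c
      = (-1:ℂ)^(m+1) * Matrix.det (Matrix.of fun (r i : Fin (m+2)) =>
          if h : (r:ℕ) < m+1 then v (c.1 i) ⟨r,h⟩ else z (c.1 i)) := by
    intro z c
    have h1 : (liftMatU (m+2) P y).mulVecLin z c
        = ∑ i : Fin (m+2), (-1:ℂ)^(i:ℕ) * minorAux (m+2) y c.1 i * z (c.1 i) := by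
      simp only [Matrix.mulVecLin_apply, Matrix.mulVec, dotProduct, liftMatU,
        Finset.sum_mul, ite_mul, zero_mul]
      rw [Finset.sum_comm]
      apply Finset.sum_congr rfl
      intro i _
      simp [Finset.sum_ite_eq]
    rw [h1]
    rw [← cofactor m (fun k r => if h : (r:ℕ) < m then y (c.1 k) ⟨r,h⟩ else 1)
      (fun k => z (c.1 k))]
    apply Finset.sum_congr rfl
    intro i _
    rfl
  -- kernel = range L
  have hker : LinearMap.ker (liftMatU (m+2) P y).mulVecLin = LinearMap.range L := by
    ext z
    simp only [LinearMap.mem_ker, LinearMap.mem_range]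
    constructor
    · intro hz
      set W : P → Fin (m+2) → ℂ :=
        fun p s => if h : (s:ℕ) < m+1 then v p ⟨s,h⟩ else z p with hW
      have hdet : ∀ c : Fin (m+2) → P, Function.Injective c →
          Matrix.det (Matrix.of fun (r i : Fin (m+2)) => W (c i) r) = 0 := by
        intro c hc
        have h2 := (hrow z ⟨c, hc⟩).symm.trans (congrFun hz ⟨c, hc⟩)
        rw [Pi.zero_apply] at h2
        rcases mul_eq_zero.mp h2 with h | h
        · exact absurd h (pow_ne_zero _ (by norm_num))
        · exact h
      set S := Submodule.span ℂ (Set.range W) with hS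
      have hrank : Module.finrank ℂ S ≤ m+1 := by
        by_contra hlt
        push_neg at hlt
        obtain ⟨b, hbsub, hbspan, hbind⟩ := exists_linearIndependent ℂ (Set.range W)
        have hbfin : b.Finite := (Set.finite_range W).subset hbsub
        haveI : Fintype b := hbfin.fintype
        have hcard : m+2 ≤ Fintype.card b := by
          have h1 : Module.finrank ℂ (Submodule.span ℂ b) = b.toFinset.card :=
            finrank_span_set_eq_card hbind
          rw [hbspan, ← hS, Set.toFinset_card] at h1
          omega
        obtain ⟨e⟩ : Nonempty (Fin (m+2) ↪ b) :=
          Function.Embedding.nonempty_iff_card_le.mpr (by simpa using hcard)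
        choose p hp using fun k : Fin (m+2) => hbsub (e k).2
        have hcinj : Function.Injective p := by
          intro k l hkl
          apply e.injective
          apply Subtype.ext
          rw [← hp k, ← hp l, hkl]
        have hind : LinearIndependent ℂ fun k : Fin (m+2) => W (p k) := by
          have h3 := hbind.comp e e.injective
          have h4 : (fun k : Fin (m+2) => W (p k)) = fun k => ((e k : b) : Fin (m+2) → ℂ) := by
            funext k; rw [hp k]
          rw [h4]; exact h3
        have hd := hdet p hcinj
        obtain ⟨t, ht0, htv⟩ := Matrix.exists_mulVec_eq_zero_iff.mpr hd
        rw [Fintype.linearIndependent_iff] at hind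
        apply ht0
        funext k
        refine hind t ?_ k
        funext r
        have h5 := congrFun htv r
        simp only [Matrix.mulVec, dotProduct, Matrix.of_apply, Pi.zero_apply] at h5
        simp only [Finset.sum_apply, Pi.smul_apply, smul_eq_mul, Pi.zero_apply]
        rw [← h5]
        exact Finset.sum_congr rfl fun i _ => mul_comm _ _
      -- projection
      set π : (Fin (m+2) → ℂ) →ₗ[ℂ] (Fin (m+1) → ℂ) :=
        LinearMap.funLeft ℂ ℂ Fin.castSucc with hπ
      have hπW : ∀ p : P, π (W p) = v p := by
        intro p
        funext t
        simp only [hπ, LinearMap.funLeft_apply, hW]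
        rw [dif_pos (by simpa using t.isLt : ((t.castSucc : Fin (m+2)) : ℕ) < m+1)]
        exact congrArg (v p) (by ext; simp)
      set f : S →ₗ[ℂ] (Fin (m+1) → ℂ) := π ∘ₗ S.subtype with hf
      have hfrange : LinearMap.range f = ⊤ := by
        rw [hf, LinearMap.range_comp, Submodule.range_subtype, hS, Submodule.map_span, ← hspan']
        congr 1
        rw [← Set.range_comp]
        exact congrArg Set.range (funext hπW)
      have hsurj : Function.Surjective f := LinearMap.range_eq_top.mp hfrange
      have hfinj : Function.Injective f := by
        have hrn := LinearMap.finrank_range_add_finrank_ker f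
        rw [hfrange, finrank_top, Module.finrank_fin_fun] at hrn
        have h6 : Module.finrank ℂ (LinearMap.ker f) = 0 := by omega
        rw [← LinearMap.ker_eq_bot]
        rwa [Submodule.finrank_eq_zero] at h6
      set E := LinearEquiv.ofBijective f ⟨hfinj, hsurj⟩ with hE
      have hmemS : ∀ p, W p ∈ S := fun p => Submodule.subset_span ⟨p, rfl⟩
      have hEsymm : ∀ p : P, E.symm (v p) = ⟨W p, hmemS p⟩ := by
        intro p
        rw [LinearEquiv.symm_apply_eq]
        show v p = f ⟨W p, hmemS p⟩
        exact (hπW p).symm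
      set g : (Fin (m+1) → ℂ) →ₗ[ℂ] ℂ :=
        (LinearMap.proj (Fin.last (m+1))) ∘ₗ (S.subtype ∘ₗ E.symm.toLinearMap) with hg
      have hgv : ∀ p : P, g (v p) = z p := by
        intro p
        simp only [hg, LinearMap.comp_apply, LinearEquiv.coe_toLinearMap, hEsymm p,
          Submodule.coe_subtype, LinearMap.proj_apply]
        simp [hW]
      refine ⟨fun t => g (fun s => if t = s then 1 else 0), ?_⟩
      funext q
      rw [hLapp, ← hgv q]
      conv_rhs => rw [pi_eq_sum_univ (v q)]
      rw [map_sum]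
      apply Finset.sum_congr rfl
      intro t _
      rw [map_smul]
      simp [smul_eq_mul]
    · rintro ⟨a, rfl⟩
      funext c
      rw [hrow]
      have hdet0 : Matrix.det (Matrix.of fun (r i : Fin (m+2)) =>
          if h : (r:ℕ) < m+1 then v (c.1 i) ⟨r,h⟩ else (L a) (c.1 i)) = 0 := by
        rw [← Matrix.exists_vecMul_eq_zero_iff]
        refine ⟨fun r => if h : (r:ℕ) < m+1 then a ⟨r,h⟩ else -1, ?_, ?_⟩
        · intro h0
          have h7 := congrFun h0 (Fin.last (m+1))
          simp at h7
        · funext i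
          simp only [Matrix.vecMul, dotProduct, Pi.zero_apply, Matrix.of_apply]
          rw [Fin.sum_univ_castSucc]
          have hstep : ∀ r : Fin (m+1),
              (fun s : Fin (m+2) => if h : (s:ℕ) < m+1 then a ⟨s,h⟩ else -1) r.castSucc *
              (if h : ((r.castSucc : Fin (m+2)) : ℕ) < m+1 then v (c.1 i) ⟨(r.castSucc : Fin (m+2)), h⟩
                else L a (c.1 i))
              = v (c.1 i) r * a r := by
            intro r
            have hr : ((r.castSucc : Fin (m+2)) : ℕ) < m+1 := by simpa using r.isLt
            simp only [dif_pos hr]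
            exact mul_comm _ _
          rw [Finset.sum_congr rfl fun r _ => hstep r]
          rw [dif_neg (by simp), dif_neg (by simp)]
          rw [hLapp]
          ring
      rw [hdet0]
      simp
  rw [hker, LinearMap.finrank_range_of_inj hLinj]
  simp [Module.finrank_fin_fun]
end
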